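/- The number of permutations of length n avoiding both 132 and 321 and containing the increasing pattern (1,2,…,k) exactly once is: 1 if n = k, and 2(2k − j) for n = j with k+1 ≤ j ≤ 2k−1, and 0 otherwise (generating function x^k + 2·Σ_{j=k+1}^{2k−1}(2k−j)x^j). -/

import Mathlib

/-- An occurrence of the pattern `τ` (of length `k`) in the permutation `π` (of length `n`)
is a strictly increasing map of positions along which `π` is order-isomorphic to `τ`. -/
def IsOcc {k n : ℕ} (τ : Fin k → Fin k) (π : Fin n → Fin n) (f : Fin k → Fin n) : Prop :=
  StrictMono f ∧ ∀ i j : Fin k, τ i < τ j ↔ π (f i) < π (f j)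

/-- `π` avoids the pattern `τ`. -/
def Avoids {k n : ℕ} (τ : Fin k → Fin k) (π : Fin n → Fin n) : Prop :=
  ¬ ∃ f, IsOcc τ π f

/-- `π` contains exactly one occurrence of the pattern `τ`. -/
def ContainsOnce {k n : ℕ} (τ : Fin k → Fin k) (π : Fin n → Fin n) : Prop :=
  ∃! f, IsOcc τ π f

def p123 : Fin 3 → Fin 3 := ![0, 1, 2]
def p132 : Fin 3 → Fin 3 := ![0, 2, 1]
def p213 : Fin 3 → Fin 3 := ![1, 0, 2]
def p231 : Fin 3 → Fin 3 := ![1, 2, 0]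
def p312 : Fin 3 → Fin 3 := ![2, 0, 1]
def p321 : Fin 3 → Fin 3 := ![2, 1, 0]

def blkv (a b : ℕ) (i : ℕ) : ℕ := if i < a then i + b else if i < a + b then i - a else i

def blk (n a b : ℕ) (h : a + b ≤ n) : Fin n → Fin n :=
  fun i => ⟨blkv a b i, by have := i.isLt; unfold blkv; split_ifs <;> omega⟩

lemma blk_val {n a b : ℕ} (h : a + b ≤ n) (i : Fin n) : (blk n a b h i : ℕ) = blkv a b i := rfl

lemma blk_blk {n a b : ℕ} (h : a + b ≤ n) (h' : b + a ≤ n) (i : Fin n) :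
    blk n b a h' (blk n a b h i) = i := by
  have := i.isLt
  apply Fin.ext
  simp only [blk_val, blkv]
  split_ifs <;> omega

lemma blk_bijective {n a b : ℕ} (h : a + b ≤ n) : Function.Bijective (blk n a b h) := by
  have h' : b + a ≤ n := by omega
  exact ⟨Function.LeftInverse.injective (g := blk n b a h') (fun i => blk_blk h h' i),
    Function.RightInverse.surjective (g := blk n b a h') (fun i => blk_blk h' h i)⟩

-- helpers to build occurrences
def tri {n : ℕ} (x y z : Fin n) : Fin 3 → Fin n :=
  fun i => if i.val = 0 then x else if i.val = 1 then y else z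

lemma tri_mono {n : ℕ} (x y z : Fin n) (h1 : x < y) (h2 : y < z) : StrictMono (tri x y z) := by
  intro i j hij
  have hi := i.isLt; have hj := j.isLt
  have hij' : i.val < j.val := hij
  unfold tri
  split_ifs <;> omega

lemma isOcc132_intro {n : ℕ} (π : Fin n → Fin n) (x y z : Fin n) (h1 : x < y) (h2 : y < z)
    (v1 : π x < π z) (v2 : π z < π y) : ∃ f, IsOcc p132 π f := by
  refine ⟨tri x y z, tri_mono x y z h1 h2, ?_⟩
  have v3 : π x < π y := lt_trans v1 v2
  intro i j
  have hi := i.isLt; have hj := j.isLt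
  have e0 : ∀ m : Fin 3, (p132 m : ℕ) = if m.val = 0 then 0 else if m.val = 1 then 2 else 1 := by
    decide
  rw [Fin.lt_def, e0, e0]
  unfold tri
  split_ifs <;> omega

lemma isOcc321_intro {n : ℕ} (π : Fin n → Fin n) (x y z : Fin n) (h1 : x < y) (h2 : y < z)
    (v1 : π y < π x) (v2 : π z < π y) : ∃ f, IsOcc p321 π f := by
  refine ⟨tri x y z, tri_mono x y z h1 h2, ?_⟩
  have v3 : π z < π x := lt_trans v2 v1
  intro i j
  have hi := i.isLt; have hj := j.isLt
  have e0 : ∀ m : Fin 3, (p321 m : ℕ) = if m.val = 0 then 2 else if m.val = 1 then 1 else 0 := by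
    decide
  rw [Fin.lt_def, e0, e0]
  unfold tri
  split_ifs <;> omega

lemma avoids132_blk {n a b : ℕ} (h : a + b ≤ n) : Avoids p132 (blk n a b h) := by
  rintro ⟨f, hf, hrel⟩
  have h01 : f 0 < f 1 := hf (by decide)
  have h12 : f 1 < f 2 := hf (by decide)
  have v1 : blk n a b h (f 0) < blk n a b h (f 2) := (hrel 0 2).1 (by decide)
  have v2 : blk n a b h (f 2) < blk n a b h (f 1) := (hrel 2 1).1 (by decide)
  have e0 : (blk n a b h (f 0) : ℕ) = blkv a b (f 0) := rfl
  have e1 : (blk n a b h (f 1) : ℕ) = blkv a b (f 1) := rfl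
  have e2 : (blk n a b h (f 2) : ℕ) = blkv a b (f 2) := rfl
  have hv1 : (blk n a b h (f 0) : ℕ) < (blk n a b h (f 2) : ℕ) := v1
  have hv2 : (blk n a b h (f 2) : ℕ) < (blk n a b h (f 1) : ℕ) := v2
  rw [e0, e2] at hv1; rw [e2, e1] at hv2
  have h01' : (f 0 : ℕ) < (f 1 : ℕ) := h01
  have h12' : (f 1 : ℕ) < (f 2 : ℕ) := h12
  unfold blkv at hv1 hv2
  split_ifs at hv1 hv2 <;> omega

lemma avoids321_blk {n a b : ℕ} (h : a + b ≤ n) : Avoids p321 (blk n a b h) := by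
  rintro ⟨f, hf, hrel⟩
  have h01 : f 0 < f 1 := hf (by decide)
  have h12 : f 1 < f 2 := hf (by decide)
  have v1 : blk n a b h (f 1) < blk n a b h (f 0) := (hrel 1 0).1 (by decide)
  have v2 : blk n a b h (f 2) < blk n a b h (f 1) := (hrel 2 1).1 (by decide)
  have hv1 : blkv a b (f 1) < blkv a b (f 0) := v1
  have hv2 : blkv a b (f 2) < blkv a b (f 1) := v2
  have h01' : (f 0 : ℕ) < (f 1 : ℕ) := h01
  have h12' : (f 1 : ℕ) < (f 2 : ℕ) := h12
  unfold blkv at hv1 hv2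
  split_ifs at hv1 hv2 <;> omega

lemma strictMonoOn_blk_iff {n a b : ℕ} (h : a + b ≤ n) (S : Finset (Fin n)) :
    StrictMonoOn (blk n a b h) ↑S ↔
      ((∀ i ∈ S, ¬((i : ℕ) < a)) ∨ (∀ i ∈ S, ¬(a ≤ (i : ℕ) ∧ (i : ℕ) < a + b))) := by
  constructor
  · intro hm
    by_contra hc
    push_neg at hc
    obtain ⟨⟨i, hiS, hi⟩, ⟨j, hjS, hj⟩⟩ := hc
    have hij : i < j := by omega
    have := hm (by exact_mod_cast hiS) (by exact_mod_cast hjS) hij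
    have h1 : blkv a b i < blkv a b j := this
    unfold blkv at h1
    split_ifs at h1 <;> omega
  · intro hc x hx y hy hxy
    have hxy' : (x : ℕ) < (y : ℕ) := hxy
    show blkv a b x < blkv a b y
    rcases hc with hc | hc
    · have h1 := hc x (by exact_mod_cast hx)
      have h2 := hc y (by exact_mod_cast hy)
      unfold blkv; split_ifs <;> omega
    · have h1 := hc x (by exact_mod_cast hx)
      have h2 := hc y (by exact_mod_cast hy)
      unfold blkv; split_ifs <;> omega

lemma isOcc_incr_iff {n k : ℕ} (π : Fin n → Fin n) (f : Fin k → Fin n) :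
    IsOcc (fun i : Fin k => i) π f ↔ StrictMono f ∧ StrictMono (π ∘ f) := by
  constructor
  · rintro ⟨hf, hrel⟩
    exact ⟨hf, fun i j hij => (hrel i j).1 hij⟩
  · rintro ⟨hf, hm⟩
    refine ⟨hf, fun i j => ⟨fun hij => hm hij, fun hij => ?_⟩⟩
    rcases lt_trichotomy i j with hh | hh | hh
    · exact hh
    · subst hh; exact absurd hij (lt_irrefl _)
    · exact absurd (hm hh) (not_lt.2 (le_of_lt hij))

lemma containsOnce_iff_exists_unique_finset {n k : ℕ} (π : Fin n → Fin n) :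
    ContainsOnce (fun i : Fin k => i) π ↔
      ∃! S : Finset (Fin n), S.card = k ∧ StrictMonoOn π ↑S := by
  have key : ∀ S : Finset (Fin n), ∀ h : S.card = k, StrictMonoOn π ↑S →
      IsOcc (fun i : Fin k => i) π (S.orderEmbOfFin h) := by
    intro S h hm
    rw [isOcc_incr_iff]
    refine ⟨(S.orderEmbOfFin h).strictMono, fun i j hij => ?_⟩
    exact hm (by simp) (by simp) ((S.orderEmbOfFin h).strictMono hij)
  have toS : ∀ f : Fin k → Fin n, IsOcc (fun i : Fin k => i) π f →
      (Finset.univ.image f).card = k ∧ StrictMonoOn π ↑(Finset.univ.image f) := by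
    intro f hf
    rw [isOcc_incr_iff] at hf
    constructor
    · rw [Finset.card_image_of_injective _ hf.1.injective, Finset.card_univ, Fintype.card_fin]
    · intro x hx y hy hxy
      simp only [Finset.coe_image, Set.mem_image] at hx hy
      obtain ⟨i, -, rfl⟩ := hx
      obtain ⟨j, -, rfl⟩ := hy
      exact hf.2 (hf.1.lt_iff_lt.1 hxy)
  have uniq : ∀ f g : Fin k → Fin n, StrictMono f → StrictMono g →
      Finset.univ.image f = Finset.univ.image g → f = g := by
    intro f g hf hg hfg
    have hc : (Finset.univ.image g).card = k := by
      rw [Finset.card_image_of_injective _ hg.injective, Finset.card_univ, Fintype.card_fin]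
    have h1 := Finset.orderEmbOfFin_unique (f := f) hc
      (fun x => by rw [← hfg]; exact Finset.mem_image_of_mem f (Finset.mem_univ x)) hf
    have h2 := Finset.orderEmbOfFin_unique (f := g) hc
      (fun x => Finset.mem_image_of_mem g (Finset.mem_univ x)) hg
    rw [h1, ← h2]
  have imgemb : ∀ (S : Finset (Fin n)) (h : S.card = k),
      Finset.univ.image (S.orderEmbOfFin h) = S := by
    intro S h
    apply Finset.eq_of_subset_of_card_le
    · intro x hx
      simp only [Finset.mem_image] at hx
      obtain ⟨i, -, rfl⟩ := hx
      simp
    · rw [h, Finset.card_image_of_injective _ (S.orderEmbOfFin h).injective,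
        Finset.card_univ, Fintype.card_fin]
  constructor
  · rintro ⟨f, hf, hfu⟩
    refine ⟨Finset.univ.image f, toS f hf, ?_⟩
    intro S ⟨hS1, hS2⟩
    have := hfu _ (key S hS1 hS2)
    rw [← this, imgemb]
  · rintro ⟨S, ⟨hS1, hS2⟩, hSu⟩
    refine ⟨S.orderEmbOfFin hS1, key S hS1 hS2, ?_⟩
    intro f hf
    have hif := toS f hf
    have hSe : Finset.univ.image f = S := hSu _ hif
    rw [isOcc_incr_iff] at hf
    exact uniq _ _ hf.1 (S.orderEmbOfFin hS1).strictMono (by rw [hSe, imgemb])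

open Finset in
lemma card_filter_val {n : ℕ} (P : ℕ → Prop) [DecidablePred P] :
    (Finset.univ.filter fun i : Fin n => P (i : ℕ)).card = ((Finset.range n).filter P).card := by
  refine Finset.card_nbij (fun i : Fin n => (i : ℕ)) ?_ ?_ ?_
  · intro x hx
    simp only [mem_filter, mem_univ, true_and] at hx ⊢
    exact Finset.mem_filter.2 ⟨by simp [mem_range, x.isLt], by simpa using hx⟩
  · intro x _ y _ hxy
    exact Fin.ext hxy
  · intro x hx
    simp only [coe_filter, mem_range, Set.mem_setOf_eq] at hx
    exact ⟨⟨x, hx.1⟩, by simp [hx.2], rfl⟩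

open Finset in
lemma card_filter_lt_or_ge {n a b : ℕ} (h : a + b ≤ n) :
    (Finset.univ.filter fun i : Fin n => (i : ℕ) < a ∨ a + b ≤ (i : ℕ)).card = a + (n - a - b) := by
  rw [card_filter_val (fun x => x < a ∨ a + b ≤ x)]
  have : (Finset.range n).filter (fun i => i < a ∨ a + b ≤ i) =
      Finset.range a ∪ Finset.Ico (a + b) n := by
    ext x
    simp only [mem_filter, mem_range, mem_union, mem_Ico]
    omega
  rw [this, Finset.card_union_of_disjoint]
  · rw [Finset.card_range, Nat.card_Ico]; omega
  · rw [Finset.disjoint_left]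
    intro x hx hx'
    simp only [mem_range] at hx
    simp only [mem_Ico] at hx'
    omega

open Finset in
lemma card_filter_ge {n a : ℕ} (h : a ≤ n) :
    (Finset.univ.filter fun i : Fin n => a ≤ (i : ℕ)).card = n - a := by
  rw [card_filter_val (fun x => a ≤ x)]
  have : (Finset.range n).filter (fun i => a ≤ i) = Finset.Ico a n := by
    ext x
    simp only [mem_filter, mem_range, mem_Ico]
    omega
  rw [this, Nat.card_Ico]

open Finset in
lemma containsOnce_blk_iff {n k a b : ℕ} (h : a + b ≤ n) :
    ContainsOnce (fun i : Fin k => i) (blk n a b h) ↔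
      (a + (n - a - b)).choose k + (b + (n - a - b)).choose k = 1 + (n - a - b).choose k := by
  classical
  set X : Finset (Fin n) := Finset.univ.filter fun i : Fin n => (i : ℕ) < a ∨ a + b ≤ (i : ℕ)
  set Y : Finset (Fin n) := Finset.univ.filter fun i : Fin n => a ≤ (i : ℕ)
  have hmem : ∀ S : Finset (Fin n),
      (S.card = k ∧ StrictMonoOn (blk n a b h) ↑S) ↔
        S ∈ powersetCard k X ∪ powersetCard k Y := by
    intro S
    rw [mem_union, mem_powersetCard, mem_powersetCard, strictMonoOn_blk_iff]
    constructor
    · rintro ⟨hc, hm | hm⟩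
      · right
        exact ⟨fun i hi => by simp only [Y, mem_filter, mem_univ, true_and]; have := hm i hi; omega, hc⟩
      · left
        exact ⟨fun i hi => by simp only [X, mem_filter, mem_univ, true_and]; have := hm i hi; omega, hc⟩
    · rintro (⟨hs, hc⟩ | ⟨hs, hc⟩)
      · refine ⟨hc, Or.inr fun i hi => ?_⟩
        have := hs hi
        simp only [X, mem_filter, mem_univ, true_and] at this
        omega
      · refine ⟨hc, Or.inl fun i hi => ?_⟩
        have := hs hi
        simp only [Y, mem_filter, mem_univ, true_and] at this
        omega
  rw [containsOnce_iff_exists_unique_finset]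
  have exu : (∃! S : Finset (Fin n), S.card = k ∧ StrictMonoOn (blk n a b h) ↑S) ↔
      (powersetCard k X ∪ powersetCard k Y).card = 1 := by
    rw [Finset.card_eq_one]
    constructor
    · rintro ⟨S, hS, hSu⟩
      refine ⟨S, ?_⟩
      ext T
      rw [Finset.mem_singleton]
      constructor
      · intro hT; exact hSu T ((hmem T).2 hT)
      · rintro rfl; exact (hmem _).1 hS
    · rintro ⟨S, hS⟩
      refine ⟨S, (hmem S).2 (by rw [hS]; exact Finset.mem_singleton_self S), ?_⟩
      intro T hT
      have := (hmem T).1 hT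
      rw [hS, Finset.mem_singleton] at this
      exact this
  rw [exu]
  have hinter : powersetCard k X ∩ powersetCard k Y = powersetCard k (X ∩ Y) := by
    ext S
    simp only [mem_inter, mem_powersetCard, Finset.subset_inter_iff]
    tauto
  have hXY : X ∩ Y = Finset.univ.filter fun i : Fin n => a + b ≤ (i : ℕ) := by
    ext i
    simp only [X, Y, mem_inter, mem_filter, mem_univ, true_and]
    omega
  have hcard := Finset.card_union_add_card_inter (powersetCard k X) (powersetCard k Y)
  rw [hinter, hXY] at hcard
  rw [Finset.card_powersetCard, Finset.card_powersetCard, Finset.card_powersetCard] at hcard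
  rw [card_filter_lt_or_ge h, card_filter_ge (le_trans (Nat.le_add_right a b) h),
    card_filter_ge h] at hcard
  have e1 : n - a = b + (n - a - b) := by omega
  have e2 : n - (a + b) = n - a - b := by omega
  have e1' := congrArg (fun m => m.choose k) e1
  have e2' := congrArg (fun m => m.choose k) e2
  omega

lemma choose_eq_one_iff {m k : ℕ} (hk : 1 ≤ k) : m.choose k = 1 ↔ m = k := by
  constructor
  · intro h1
    by_contra hne
    rcases lt_or_gt_of_ne hne with hlt | hgt
    · rw [Nat.choose_eq_zero_of_lt hlt] at h1; omega
    · have : (k + 1).choose k ≤ m.choose k := Nat.choose_le_choose k hgt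
      rw [Nat.choose_succ_self_right] at this
      omega
  · rintro rfl
    exact Nat.choose_self _

lemma numeric_cond {a b t k : ℕ} (hk : 1 ≤ k) (hab : a = 0 ↔ b = 0) :
    (a + t).choose k + (b + t).choose k = 1 + t.choose k ↔
      ((a = 0 ∧ b = 0 ∧ t = k) ∨
       (1 ≤ a ∧ 1 ≤ b ∧ a + t = k ∧ b + t < k) ∨
       (1 ≤ a ∧ 1 ≤ b ∧ b + t = k ∧ a + t < k)) := by
  rcases Nat.eq_zero_or_pos a with ha | ha
  · have hb : b = 0 := hab.1 ha
    subst ha; subst hb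
    simp only [Nat.zero_add, zero_add]
    have hx : (t.choose k + t.choose k = 1 + t.choose k) ↔ t.choose k = 1 := by omega
    rw [hx, choose_eq_one_iff hk]
    simp only [true_and]
    omega
  · have hb : 1 ≤ b := by omega
    constructor
    · intro heq
      have ht : t < k := by
        by_contra ht
        push_neg at ht
        have h1 : t.choose k ≥ 1 := Nat.choose_pos ht
        have h2 : (t + 1).choose k ≤ (a + t).choose k := Nat.choose_le_choose k (by omega)
        have h3 : (t + 1).choose k ≤ (b + t).choose k := Nat.choose_le_choose k (by omega)
        obtain ⟨k', rfl⟩ : ∃ k', k = k' + 1 := ⟨k - 1, by omega⟩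
        have h4 : (t + 1).choose (k' + 1) = t.choose k' + t.choose (k' + 1) :=
          Nat.choose_succ_succ' t k'
        have h5 : 1 ≤ t.choose k' := Nat.choose_pos (by omega)
        omega
      have ht0 : t.choose k = 0 := Nat.choose_eq_zero_of_lt ht
      rw [ht0] at heq
      have : (a + t).choose k = 1 ∧ (b + t).choose k = 0 ∨
          (a + t).choose k = 0 ∧ (b + t).choose k = 1 := by omega
      rcases this with ⟨h1, h2⟩ | ⟨h1, h2⟩
      · rw [choose_eq_one_iff hk] at h1
        rw [Nat.choose_eq_zero_iff] at h2
        right; left; exact ⟨ha, hb, h1, h2⟩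
      · rw [choose_eq_one_iff hk] at h2
        rw [Nat.choose_eq_zero_iff] at h1
        right; right; exact ⟨ha, hb, h2, h1⟩
    · rintro (⟨h1, _, _⟩ | ⟨-, -, h1, h2⟩ | ⟨-, -, h1, h2⟩) 
      · omega
      all_goals {
        rw [h1, Nat.choose_self, Nat.choose_eq_zero_of_lt h2,
          Nat.choose_eq_zero_of_lt (by omega : t < k)]
      }

lemma structure_of_avoids {n : ℕ} (π : Fin n → Fin n) (hbij : Function.Bijective π)
    (h132 : Avoids p132 π) (h321 : Avoids p321 π) :
    ∃ a b, ∃ h : a + b ≤ n, (a = 0 ↔ b = 0) ∧ π = blk n a b h := by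
  rcases Nat.eq_zero_or_pos n with hn | hn
  · subst hn
    exact ⟨0, 0, le_refl 0, Iff.rfl, funext fun i => i.elim0⟩
  set z0 : Fin n := ⟨0, hn⟩ with hz0
  obtain ⟨A0, hA0⟩ := hbij.2 z0
  set b : ℕ := (π z0 : ℕ) with hb
  set a : ℕ := (A0 : ℕ) with ha
  have hz0v : (z0 : ℕ) = 0 := rfl
  have hA0v : (π A0 : ℕ) = 0 := by rw [hA0]
  -- F1 : mono on positions ≥ a
  have F1 : ∀ i j : Fin n, a ≤ (i : ℕ) → i < j → π i < π j := by
    intro i j hai hij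
    by_contra hc
    have hne : π i ≠ π j := fun he => (ne_of_lt hij) (hbij.1 he)
    have hji : π j < π i := by omega
    rcases eq_or_lt_of_le hai with hai' | hai'
    · have : i = A0 := Fin.ext (by omega)
      subst this
      have : (π j : ℕ) < 0 := by omega
      omega
    · have hiA : i ≠ A0 := fun he => by rw [he] at hai'; omega
      have hjA : j ≠ A0 := fun he => by
        rw [he] at hij
        have : (A0 : ℕ) < (j:ℕ) := by omega
        omega
      have hpi : π i ≠ z0 := fun he => hiA (hbij.1 (he.trans hA0.symm))
      have hpj : π j ≠ z0 := fun he => hjA (hbij.1 (he.trans hA0.symm))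
      have hA0i : A0 < i := by omega
      refine h132 (isOcc132_intro π A0 i j hA0i hij ?_ ?_)
      · have : (π j : ℕ) ≠ 0 := fun he => hpj (Fin.ext (by omega))
        omega
      · omega
  -- F2 : mono on positions < a
  have F2 : ∀ i j : Fin n, (j : ℕ) < a → i < j → π i < π j := by
    intro i j hja hij
    by_contra hc
    have hne : π i ≠ π j := fun he => (ne_of_lt hij) (hbij.1 he)
    have hji : π j < π i := by omega
    have hjA : j ≠ A0 := fun he => by rw [he] at hja; omega
    have hpj : π j ≠ z0 := fun he => hjA (hbij.1 (he.trans hA0.symm))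
    have hjA0 : j < A0 := by omega
    refine h321 (isOcc321_intro π i j A0 hij hjA0 hji ?_)
    have : (π j : ℕ) ≠ 0 := fun he => hpj (Fin.ext (by omega))
    omega
  -- F0
  have F0 : a = 0 ↔ b = 0 := by
    constructor
    · intro ha0
      have : A0 = z0 := Fin.ext (by omega)
      rw [hb, ← this, hA0v]
    · intro hb0
      have : π z0 = z0 := Fin.ext (by omega)
      have : A0 = z0 := hbij.1 (hA0.trans this.symm)
      omega
  rcases Nat.eq_zero_or_pos a with ha0 | ha1
  · -- identity case
    have hb0 : b = 0 := F0.1 ha0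
    refine ⟨0, 0, by omega, Iff.rfl, ?_⟩
    have key : ∀ m : ℕ, ∀ i : Fin n, (i : ℕ) = m → π i = i := by
      intro m
      induction m using Nat.strong_induction_on with
      | _ m IH =>
        intro i him
        obtain ⟨j, hj⟩ := hbij.2 i
        rcases lt_trichotomy ((j : ℕ)) m with hc | hc | hc
        · have := IH _ hc j rfl
          rw [this] at hj
          omega
        · have : j = i := Fin.ext (by omega)
          rw [← this, hj]
          exact this.symm
        · have hij : i < j := by omega
          have hmono : π i < π j := F1 i j (by omega) hij
          rw [hj] at hmono
          have hv : (π i : ℕ) < m := by omega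
          have := IH _ hv (π i) rfl
          have : π i = i := hbij.1 this
          omega
    funext i
    have := key (i : ℕ) i rfl
    apply Fin.ext
    rw [this]
    show (i : ℕ) = blkv 0 0 i
    unfold blkv
    split_ifs <;> omega
  · -- block case
    have hb1 : 1 ≤ b := by
      rcases Nat.eq_zero_or_pos b with h0 | h1
      · exact absurd (F0.2 h0) (by omega)
      · exact h1
    -- F4 : lower bound on first run
    have F4 : ∀ m : ℕ, ∀ i : Fin n, (i : ℕ) = m → m < a → b + m ≤ (π i : ℕ) := by
      intro m
      induction m with
      | zero =>
        intro i hi _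
        have hiz : i = z0 := Fin.ext (by omega)
        rw [hiz, ← hb]
        omega
      | succ m IH =>
        intro i hi hm
        have hm' : m < n := by omega
        have hmv : ((⟨m, hm'⟩ : Fin n) : ℕ) = m := rfl
        have h1 : π ⟨m, hm'⟩ < π i := F2 _ i (by omega) (by rw [Fin.lt_def]; omega)
        have h2 := IH ⟨m, hm'⟩ rfl (by omega)
        omega
    have han : a < n := A0.isLt
    have hab : a + b ≤ n := by
      have hm' : a - 1 < n := by omega
      have hmv : ((⟨a - 1, hm'⟩ : Fin n) : ℕ) = a - 1 := rfl
      have := F4 (a - 1) ⟨a - 1, hm'⟩ hmv (by omega)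
      have := (π ⟨a - 1, hm'⟩).isLt
      omega
    -- F3 : tail positions avoid middle values
    have F3 : ∀ j : Fin n, a ≤ (j : ℕ) → (π j : ℕ) < b ∨ a + b ≤ (π j : ℕ) := by
      intro j hja
      by_contra hc
      push_neg at hc
      obtain ⟨hc1, hc2⟩ := hc
      have hjA : j ≠ A0 := fun he => by
        rw [he, hA0v] at hc1; omega
      have hja' : a < (j : ℕ) := by omega
      have hjz : j ≠ z0 := fun he => by rw [he] at hja'; omega
      have hpj : (π j : ℕ) ≠ b := fun he => by
        have : π j = π z0 := Fin.ext (by omega)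
        exact hjz (hbij.1 this)
      rcases Nat.eq_or_lt_of_le ha1 with ha1' | ha2
      · omega
      · have hp' : a - 1 < n := by omega
        set p : Fin n := ⟨a - 1, hp'⟩ with hp
        have hpv : (p : ℕ) = a - 1 := rfl
        have h4 := F4 (a - 1) p hpv (by omega)
        have hjp : (π j : ℕ) ≠ (π p : ℕ) := fun he => by
          have : j = p := hbij.1 (Fin.ext he)
          rw [this] at hja
          simp [hp] at hja
          omega
        refine h132 (isOcc132_intro π z0 p j ?_ ?_ ?_ ?_)
        · rw [Fin.lt_def]; omega
        · rw [Fin.lt_def]; omega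
        · rw [Fin.lt_def]; omega
        · rw [Fin.lt_def]; omega
    -- F5
    have F5 : ∀ v : Fin n, b ≤ (v : ℕ) → (v : ℕ) < a + b → ∃ i : Fin n, (i : ℕ) < a ∧ π i = v := by
      intro v hv1 hv2
      obtain ⟨i, hi⟩ := hbij.2 v
      rcases lt_or_ge ((i : ℕ)) a with hc | hc
      · exact ⟨i, hc, hi⟩
      · have := F3 i hc
        rw [hi] at this
        omega
    -- F6
    have F6 : ∀ m : ℕ, ∀ i : Fin n, (i : ℕ) = m → m < a → (π i : ℕ) = b + m := by
      intro m
      induction m using Nat.strong_induction_on with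
      | _ m IH =>
        intro i him hma
        have hge := F4 m i him hma
        by_contra hc
        have hgt : b + m < (π i : ℕ) := by omega
        have hwn : b + m < n := by have := (π i).isLt; omega
        have hwv : ((⟨b + m, hwn⟩ : Fin n) : ℕ) = b + m := rfl
        obtain ⟨j, hja, hjv⟩ := F5 ⟨b + m, hwn⟩ (by omega) (by omega)
        have hjval : (π j : ℕ) = b + m := by rw [hjv]
        rcases lt_trichotomy ((j : ℕ)) m with hcc | hcc | hcc
        · have := IH _ hcc j rfl (by omega)
          omega
        · have : j = i := Fin.ext (by omega)
          rw [this] at hjval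
          omega
        · have : π i < π j := F2 i j hja (by rw [Fin.lt_def]; omega)
          omega
    -- F7
    have F7 : ∀ m : ℕ, ∀ j : Fin n, (j : ℕ) = m → a ≤ m →
        (π j : ℕ) = (if m < a + b then m - a else m) := by
      intro m
      induction m using Nat.strong_induction_on with
      | _ m IH =>
        intro j hjm hma
        -- lower bound
        have hlow : (if m < a + b then m - a else m) ≤ (π j : ℕ) := by
          rcases Nat.eq_or_lt_of_le hma with hma' | hma'
          · split_ifs <;> omega
          · have hm' : m - 1 < n := by omega
            have hmv : ((⟨m - 1, hm'⟩ : Fin n) : ℕ) = m - 1 := rfl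
            have h1 : π ⟨m - 1, hm'⟩ < π j := F1 _ j (by omega) (by rw [Fin.lt_def]; omega)
            have h2 := IH (m - 1) (by omega) ⟨m - 1, hm'⟩ rfl (by omega)
            have h3 := F3 j (by omega)
            have h1' : (π ⟨m - 1, hm'⟩ : ℕ) < (π j : ℕ) := h1
            split_ifs at h2 ⊢ <;> omega
        by_contra hc
        set w : ℕ := if m < a + b then m - a else m with hw
        have hgt : w < (π j : ℕ) := by omega
        have hwn : w < n := by have := (π j).isLt; omega
        obtain ⟨j', hj'⟩ := hbij.2 ⟨w, hwn⟩
        have hj'val : (π j' : ℕ) = w := by rw [hj']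
        have hj'a : a ≤ (j' : ℕ) := by
          by_contra hcc
          push_neg at hcc
          have := F6 (j' : ℕ) j' rfl hcc
          split_ifs at hw <;> omega
        rcases lt_trichotomy ((j' : ℕ)) m with hcc | hcc | hcc
        · have := IH _ hcc j' rfl hj'a
          split_ifs at this hw <;> omega
        · have : j' = j := Fin.ext (by omega)
          rw [this] at hj'val
          omega
        · have : π j < π j' := F1 j j' (by omega) (by rw [Fin.lt_def]; omega)
          omega
    refine ⟨a, b, hab, by omega, ?_⟩
    funext i
    apply Fin.ext
    rw [blk_val]
    unfold blkv
    rcases lt_or_ge ((i : ℕ)) a with hc | hc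
    · have := F6 (i : ℕ) i rfl hc
      split_ifs <;> omega
    · have := F7 (i : ℕ) i rfl hc
      split_ifs at this ⊢ <;> omega

def goodCond (n k a b : ℕ) : Prop :=
  a + b ≤ n ∧ (a = 0 ↔ b = 0) ∧
    ((a = 0 ∧ b = 0 ∧ n - a - b = k) ∨
     (1 ≤ a ∧ 1 ≤ b ∧ a + (n - a - b) = k ∧ b + (n - a - b) < k) ∨
     (1 ≤ a ∧ 1 ≤ b ∧ b + (n - a - b) = k ∧ a + (n - a - b) < k))

theorem stmt7' (k : ℕ) (hk : 1 ≤ k) (n : ℕ) :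
    Nat.card {π : Fin n → Fin n // Function.Bijective π ∧
      Avoids p132 π ∧ Avoids p321 π ∧ ContainsOnce (fun i : Fin k => i) π} =
      if n = k then 1
      else if k + 1 ≤ n ∧ n ≤ 2 * k - 1 then 2 * (2 * k - n)
      else 0 := by
  classical
  set P : Finset (ℕ × ℕ) := (Finset.range (n+1) ×ˢ Finset.range (n+1)).filter
      (fun p => goodCond n k p.1 p.2) with hP
  have hmem : ∀ p : ℕ × ℕ, p ∈ P → goodCond n k p.1 p.2 := fun p hp =>
    (Finset.mem_filter.1 hp).2
  have key : ∀ a b : ℕ, goodCond n k a b → ∀ h : a + b ≤ n,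
      Function.Bijective (blk n a b h) ∧ Avoids p132 (blk n a b h) ∧
        Avoids p321 (blk n a b h) ∧ ContainsOnce (fun i : Fin k => i) (blk n a b h) := by
    intro a b hg h
    refine ⟨blk_bijective h, avoids132_blk h, avoids321_blk h, ?_⟩
    rw [containsOnce_blk_iff h, numeric_cond hk hg.2.1]
    rcases hg.2.2 with ⟨h1, h2, h3⟩ | hc | hc
    · exact Or.inl ⟨h1, h2, by omega⟩
    · exact Or.inr (Or.inl hc)
    · exact Or.inr (Or.inr hc)
  let F : {p : ℕ × ℕ // p ∈ P} → {π : Fin n → Fin n // Function.Bijective π ∧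
      Avoids p132 π ∧ Avoids p321 π ∧ ContainsOnce (fun i : Fin k => i) π} := fun p =>
    ⟨blk n p.1.1 p.1.2 (hmem p.1 p.2).1, key _ _ (hmem p.1 p.2) (hmem p.1 p.2).1⟩
  have hF : Function.Bijective F := by
    constructor
    · rintro ⟨⟨a, b⟩, hab⟩ ⟨⟨a', b'⟩, hab'⟩ heq
      have hg := hmem _ hab
      have hg' := hmem _ hab'
      simp only [F, Subtype.mk.injEq] at heq
      have hval : ∀ m, ∀ hm : m < n, blkv a b m = blkv a' b' m := fun m hm =>
        congrArg Fin.val (congrFun heq ⟨m, hm⟩)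
      obtain ⟨hs, hiff, -⟩ := hg
      obtain ⟨hs', hiff', -⟩ := hg'
      have hab2 : a = a' ∧ b = b' := by
        rcases Nat.eq_zero_or_pos a with ha0 | ha1 <;>
          rcases Nat.eq_zero_or_pos a' with ha0' | ha1'
        · omega
        · have hb0 : b = 0 := hiff.1 ha0
          have hb1' : 1 ≤ b' := by omega
          have := hval 0 (by omega)
          unfold blkv at this
          split_ifs at this <;> omega
        · have hb0' : b' = 0 := hiff'.1 ha0'
          have hb1 : 1 ≤ b := by omega
          have := hval 0 (by omega)
          unfold blkv at this
          split_ifs at this <;> omega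
        · have hb1 : 1 ≤ b := by omega
          have hb1' : 1 ≤ b' := by omega
          have h0 := hval 0 (by omega)
          have ha := hval a (by omega)
          unfold blkv at h0 ha
          split_ifs at h0 ha <;> omega
      exact Subtype.ext (Prod.ext hab2.1 hab2.2)
    · rintro ⟨π, hπbij, h132, h321, honce⟩
      obtain ⟨a, b, h, hiff, rfl⟩ := structure_of_avoids π hπbij h132 h321
      have harith := (numeric_cond hk hiff).1 ((containsOnce_blk_iff h).1 honce)
      have hgood : goodCond n k a b := by
        refine ⟨h, hiff, ?_⟩
        rcases harith with ⟨h1, h2, h3⟩ | hc | hc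
        · exact Or.inl ⟨h1, h2, by omega⟩
        · exact Or.inr (Or.inl hc)
        · exact Or.inr (Or.inr hc)
      refine ⟨⟨(a, b), ?_⟩, ?_⟩
      · rw [hP, Finset.mem_filter, Finset.mem_product, Finset.mem_range, Finset.mem_range]
        exact ⟨⟨by omega, by omega⟩, hgood⟩
      · exact Subtype.ext rfl
  rw [(Nat.card_eq_of_bijective F hF).symm, Nat.card_eq_fintype_card, Fintype.card_coe]
  split_ifs with hnk hrange
  · have : P = {(0, 0)} := by
      ext ⟨x, y⟩
      rw [hP, Finset.mem_filter, Finset.mem_product, Finset.mem_range, Finset.mem_range,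
        Finset.mem_singleton, Prod.mk.injEq]
      unfold goodCond
      omega
    rw [this, Finset.card_singleton]
  · have hPe : P = ((Finset.range (2*k-n)).image fun t => (k - t, n - k)) ∪
        ((Finset.range (2*k-n)).image fun t => (n - k, k - t)) := by
      ext ⟨x, y⟩
      rw [hP, Finset.mem_filter, Finset.mem_product, Finset.mem_range, Finset.mem_range,
        Finset.mem_union, Finset.mem_image, Finset.mem_image]
      simp only [Finset.mem_range, Prod.mk.injEq]
      unfold goodCond
      constructor
      · rintro ⟨⟨hx, hy⟩, hle, hiff, hd⟩
        rcases hd with ⟨h1, h2, h3⟩ | ⟨h1, h2, h3, h4⟩ | ⟨h1, h2, h3, h4⟩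
        · omega
        · exact Or.inl ⟨n - x - y, by omega, by omega, by omega⟩
        · exact Or.inr ⟨n - x - y, by omega, by omega, by omega⟩
      · rintro (⟨t, ht, he1, he2⟩ | ⟨t, ht, he1, he2⟩)
        · refine ⟨⟨by omega, by omega⟩, by omega, by omega,
            Or.inr (Or.inl ⟨by omega, by omega, by omega, by omega⟩)⟩
        · refine ⟨⟨by omega, by omega⟩, by omega, by omega,
            Or.inr (Or.inr ⟨by omega, by omega, by omega, by omega⟩)⟩
    have hd : Disjoint ((Finset.range (2*k-n)).image fun t => (k - t, n - k))
        ((Finset.range (2*k-n)).image fun t => (n - k, k - t)) := by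
      rw [Finset.disjoint_left]
      rintro ⟨x, y⟩ hp hq
      simp only [Finset.mem_image, Finset.mem_range, Prod.mk.injEq] at hp hq
      obtain ⟨t, ht, he1, he2⟩ := hp
      obtain ⟨s, hs, hf1, hf2⟩ := hq
      omega
    have hi1 : Set.InjOn (fun t => ((k - t : ℕ), (n - k : ℕ)))
        ↑(Finset.range (2*k-n)) := by
      intro t ht s hs heq
      simp only [Finset.coe_range, Set.mem_Iio] at ht hs
      rw [Prod.mk.injEq] at heq
      omega
    have hi2 : Set.InjOn (fun t => ((n - k : ℕ), (k - t : ℕ)))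
        ↑(Finset.range (2*k-n)) := by
      intro t ht s hs heq
      simp only [Finset.coe_range, Set.mem_Iio] at ht hs
      rw [Prod.mk.injEq] at heq
      omega
    rw [hPe, Finset.card_union_of_disjoint hd, Finset.card_image_of_injOn hi1,
      Finset.card_image_of_injOn hi2, Finset.card_range]
    omega
  · have : P = ∅ := by
      ext ⟨x, y⟩
      rw [hP, Finset.mem_filter, Finset.mem_product, Finset.mem_range, Finset.mem_range]
      simp only [Finset.notMem_empty, iff_false]
      unfold goodCond
      omega
    rw [this, Finset.card_empty]

/-- for `k ≥ 1`, `|Sₙ(132,321; (1,2,…,k))|` is `1` for `n = k`,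
`2(2k − n)` for `k+1 ≤ n ≤ 2k−1`, and `0` otherwise. -/
theorem stmt7 (k : ℕ) (hk : 1 ≤ k) (n : ℕ) :
    Nat.card {π : Fin n → Fin n // Function.Bijective π ∧
      Avoids p132 π ∧ Avoids p321 π ∧ ContainsOnce (fun i : Fin k => i) π} =
      if n = k then 1
      else if k + 1 ≤ n ∧ n ≤ 2 * k - 1 then 2 * (2 * k - n)
      else 0 :=
  stmt7' k hk n
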